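/- arXiv:1201.0435 — 3 statements merged into one kernel-verified Lean document; each statement's English description precedes it below -/
import Mathlib

section
/- If F is a capacity factor of a point-to-point network N=(V,E,s,t) with unit edge capacities, then the maximum s-t flow of N with F deleted equals the maximum s-t flow of N minus exactly 1. -/
/-- A point-to-point network: a finite directed multigraph with edge set
`edges`, endpoint maps `tail`/`head`, source `s` and sink `t`; every edge has
unit capacity. -/
structure Network (V : Type) (ε : Type) where
  edges : Finset ε
  tail : ε → V
  head : ε → V
  s : V
  t : V

namespace Network

variable {V ε : Type} [DecidableEq ε]

/-- `p` is a nonempty directed walk from `u` to `v` using edges of `N`. -/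
def IsWalk (N : Network V ε) (u v : V) (p : List ε) : Prop :=
  p ≠ [] ∧ (∀ e ∈ p, e ∈ N.edges) ∧
  (∀ i, ∀ h : i + 1 < p.length,
    N.head (p.get ⟨i, Nat.lt_of_succ_lt h⟩) = N.tail (p.get ⟨i + 1, h⟩)) ∧
  (∀ h : 0 < p.length, N.tail (p.get ⟨0, h⟩) = u) ∧
  (∀ h : 0 < p.length, N.head (p.get ⟨p.length - 1, Nat.sub_lt h Nat.one_pos⟩) = v)

/-- An `s`-`t` path: an edge-simple walk from the source to the sink. -/
def IsPath (N : Network V ε) (p : List ε) : Prop :=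
  N.IsWalk N.s N.t p ∧ p.Nodup

/-- `v` is reachable from `u` by a directed walk (or `u = v`). -/
def Reach (N : Network V ε) (u v : V) : Prop :=
  u = v ∨ ∃ p, N.IsWalk u v p

/-- Reachability within the subgraph induced by the vertex set `S`. -/
def ReachIn (N : Network V ε) (S : Set V) (u v : V) : Prop :=
  u = v ∨ ∃ p, N.IsWalk u v p ∧ ∀ e ∈ p, N.tail e ∈ S ∧ N.head e ∈ S

/-- An edge-simple directed cycle. -/
def IsCycle (N : Network V ε) (p : List ε) : Prop :=
  ∃ u, N.IsWalk u u p ∧ p.Nodup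

def Acyclic (N : Network V ε) : Prop := ∀ p, ¬ N.IsCycle p

/-- A collection of pairwise edge-disjoint `s`-`t` paths (an integral flow in a
unit-capacity network). -/
def IsFlowList (N : Network V ε) (fs : List (List ε)) : Prop :=
  (∀ p ∈ fs, N.IsPath p) ∧ fs.Pairwise fun p q => ∀ e ∈ p, e ∉ q

def HasFlow (N : Network V ε) (n : ℕ) : Prop :=
  ∃ fs, N.IsFlowList fs ∧ fs.length = n

/-- The maximum-flow value `C_N(s,t)`: the maximum number of pairwise
edge-disjoint directed `s`-`t` paths. -/
noncomputable def maxFlow (N : Network V ε) : ℕ :=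
  sSup {n | N.HasFlow n}

/-- Delete the edges of `F` from the network. -/
def del (N : Network V ε) (F : Finset ε) : Network V ε :=
  { N with edges := N.edges \ F }

/-- `F` is a `k`-th order capacity factor of `N`:
`C_{N\F} ≤ C_N − k`, and `C_{N\F'} > C_N − k` for every proper `F' ⊊ F`. -/
def IsKCF (N : Network V ε) (k : ℕ) (F : Finset ε) : Prop :=
  F.Nonempty ∧ F ⊆ N.edges ∧ (N.del F).maxFlow + k ≤ N.maxFlow ∧
    ∀ F' ⊂ F, N.maxFlow < (N.del F').maxFlow + k

/-- `F` is a capacity factor of `N`: deleting `F` decreases the maximum flow,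
while deleting any proper subset does not. -/
def IsCF (N : Network V ε) (F : Finset ε) : Prop :=
  F.Nonempty ∧ F ⊆ N.edges ∧ (N.del F).maxFlow < N.maxFlow ∧
    ∀ F' ⊂ F, (N.del F').maxFlow = N.maxFlow

/-- The set of edges used by a flow given as a list of paths. -/
def usedEdges (fs : List (List ε)) : Finset ε := fs.flatten.toFinset

/-- Residual network w.r.t. a set of used (unit-capacity) edges: used edges
are reversed, unused edges keep their direction. -/
def residual (N : Network V ε) (used : Finset ε) : Network V ε :=
  { edges := N.edges,
    tail := fun e => if e ∈ used then N.head e else N.tail e,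
    head := fun e => if e ∈ used then N.tail e else N.head e,
    s := N.s, t := N.t }

/-- The same network with sink replaced by `v`. -/
def withSink (N : Network V ε) (v : V) : Network V ε := { N with t := v }

end Network

open Network

namespace NetworkAux

open Network

variable {V ε : Type} [DecidableEq ε]

lemma flow_length_le (E : Finset ε) :
    ∀ fs : List (List ε), (∀ p ∈ fs, p ≠ [] ∧ ∀ e ∈ p, e ∈ E) →
      fs.Pairwise (fun p q => ∀ e ∈ p, e ∉ q) → fs.length ≤ E.card := by
  intro fs
  induction fs generalizing E with
  | nil => simp
  | cons p rest ih =>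
    intro h hp
    rw [List.pairwise_cons] at hp
    obtain ⟨hpne, hpE⟩ := h p List.mem_cons_self
    obtain ⟨e, he⟩ := List.exists_mem_of_ne_nil p hpne
    have heE : e ∈ E := hpE e he
    have hrest : rest.length ≤ (E.erase e).card := by
      apply ih
      · intro q hq
        refine ⟨(h q (List.mem_cons_of_mem _ hq)).1, fun x hx => ?_⟩
        refine Finset.mem_erase.2 ⟨?_, (h q (List.mem_cons_of_mem _ hq)).2 x hx⟩
        rintro rfl
        exact hp.1 q hq x he hx
      · exact hp.2
    have hc : (E.erase e).card = E.card - 1 := Finset.card_erase_of_mem heE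
    have hE : 1 ≤ E.card := Finset.card_pos.2 ⟨e, heE⟩
    simp only [List.length_cons]
    omega

omit [DecidableEq ε] in
lemma hasFlow_zero (N : Network V ε) : N.HasFlow 0 :=
  ⟨[], ⟨fun p hp => absurd hp List.not_mem_nil, List.Pairwise.nil⟩, rfl⟩

lemma bddAbove_hasFlow (N : Network V ε) : BddAbove {n | N.HasFlow n} := by
  refine ⟨N.edges.card, fun n hn => ?_⟩
  obtain ⟨fs, ⟨h1, h2⟩, rfl⟩ := hn
  exact flow_length_le N.edges fs (fun p hp => ⟨(h1 p hp).1.1, (h1 p hp).1.2.1⟩) h2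

lemma hasFlow_maxFlow (N : Network V ε) : N.HasFlow N.maxFlow := by
  have h0 : (0 : ℕ) ∈ {n | N.HasFlow n} := hasFlow_zero N
  exact Nat.sSup_mem ⟨0, h0⟩ (bddAbove_hasFlow N)

lemma le_maxFlow {N : Network V ε} {n : ℕ} (h : N.HasFlow n) : n ≤ N.maxFlow :=
  le_csSup (bddAbove_hasFlow N) h

lemma filter_not_mem_length (e : ε) :
    ∀ fs : List (List ε), fs.Pairwise (fun p q => ∀ x ∈ p, x ∉ q) →
      fs.length ≤ (fs.filter (fun p => e ∉ p)).length + 1 := by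
  intro fs
  induction fs with
  | nil => simp
  | cons p rest ih =>
    intro hp
    rw [List.pairwise_cons] at hp
    by_cases he : e ∈ p
    · rw [List.filter_cons_of_neg (by simpa using he)]
      have hre : rest.filter (fun p => e ∉ p) = rest :=
        List.filter_eq_self.2 (fun q hq => by simpa using fun h => hp.1 q hq e he h)
      rw [hre]
      simp
    · rw [List.filter_cons_of_pos (by simpa using he)]
      have := ih hp.2
      simp only [List.length_cons]
      omega

lemma maxFlow_del_singleton (N : Network V ε) (e : ε) :
    N.maxFlow ≤ (N.del {e}).maxFlow + 1 := by
  obtain ⟨fs, ⟨h1, h2⟩, hlen⟩ := hasFlow_maxFlow N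
  have hlen' : fs.length ≤ (fs.filter (fun p => e ∉ p)).length + 1 :=
    filter_not_mem_length e fs h2
  have hflow : (N.del {e}).HasFlow (fs.filter (fun p => e ∉ p)).length := by
    refine ⟨fs.filter (fun p => e ∉ p), ⟨?_, ?_⟩, rfl⟩
    · intro p hp
      have hpf := List.mem_filter.1 hp
      have hne : e ∉ p := by simpa using hpf.2
      obtain ⟨hw, hnd⟩ := h1 p hpf.1
      refine ⟨⟨hw.1, fun x hx => ?_, hw.2.2.1, hw.2.2.2.1, hw.2.2.2.2⟩, hnd⟩
      refine Finset.mem_sdiff.2 ⟨hw.2.1 x hx, ?_⟩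
      simp only [Finset.mem_singleton]
      rintro rfl
      exact hne hx
    · exact h2.sublist List.filter_sublist
  have := le_maxFlow hflow
  omega

end NetworkAux

/-- If `F` is a capacity factor of a unit-capacity point-to-point network, then
deleting `F` decreases the maximum flow by exactly 1. -/
theorem capacityFactor_maxFlow_sub_one {V ε : Type} [DecidableEq ε]
    (N : Network V ε) (F : Finset ε) (hF : N.IsCF F) :
    (N.del F).maxFlow + 1 = N.maxFlow := by
  obtain ⟨⟨e, he⟩, hFE, hlt, hprop⟩ := hF
  have hss : F.erase e ⊂ F := Finset.erase_ssubset he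
  have h1 : (N.del (F.erase e)).maxFlow = N.maxFlow := hprop _ hss
  have h2 : N.del F = (N.del (F.erase e)).del {e} := by
    simp only [Network.del]
    congr 1
    ext x
    simp only [Finset.mem_sdiff, Finset.mem_erase, Finset.mem_singleton]
    have hxe : x = e → x ∈ F := fun h => h ▸ he
    tauto
  have h3 := NetworkAux.maxFlow_del_singleton (N.del (F.erase e)) e
  rw [h1, ← h2] at h3
  omega
end

section
/- Let N=(V,E,s,t) be an acyclic unit-capacity point-to-point network whose edge set can be partitioned into C_N(s,t) pairwise edge-disjoint s-t paths. Then for every edge e ∈ E, deleting e decreases the maximum s-t flow by exactly 1, i.e., C_{N\{e}}(s,t) = C_N(s,t) − 1. -/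
namespace Network

variable {V ε : Type} [DecidableEq ε]

set_option linter.unusedSectionVars false

inductive W (N : Network V ε) : V → V → List ε → Prop
  | single (e : ε) : e ∈ N.edges → W N (N.tail e) (N.head e) [e]
  | cons (e : ε) (p : List ε) (v : V) : e ∈ N.edges → W N (N.head e) v p →
      W N (N.tail e) v (e :: p)

set_option linter.unusedSectionVars false

theorem W_of_isWalk {N : Network V ε} {u v : V} {p : List ε}
    (h : N.IsWalk u v p) : W N u v p := by
  induction p generalizing u with
  | nil => exact absurd rfl h.1
  | cons e q ih =>
    obtain ⟨-, hmem, hchain, hfst, hlst⟩ := h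
    have he : e ∈ N.edges := hmem e (by simp)
    have hu : N.tail e = u := hfst (by simp)
    cases q with
    | nil =>
      have hv : N.head e = v := by simpa using hlst (by simp)
      rw [← hu, ← hv]; exact W.single e he
    | cons f r =>
      have hq : N.IsWalk (N.head e) v (f :: r) := by
        refine ⟨by simp, fun x hx => hmem x (by simp [hx]), ?_, ?_, ?_⟩
        · intro i h
          have := hchain (i+1) (by simpa using Nat.succ_lt_succ h)
          simpa using this
        · intro h
          have := hchain 0 (by simp)
          simpa using this.symm
        · intro h
          have h2 : 0 < (e :: f :: r).length := by simp
          have := hlst h2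
          simpa [List.length_cons, Nat.succ_sub_one] using this
      rw [← hu]
      exact W.cons e _ v he (ih hq)

set_option linter.unusedSectionVars false

theorem isWalk_of_W {N : Network V ε} {u v : V} {p : List ε}
    (h : W N u v p) : N.IsWalk u v p := by
  induction h with
  | single e he =>
    refine ⟨by simp, by simp [he], ?_, by simp, by simp⟩
    intro i h; simp at h
  | cons e q w he hw ih =>
    obtain ⟨hne, hmem, hchain, hfst, hlst⟩ := ih
    refine ⟨by simp, ?_, ?_, by simp, ?_⟩
    · intro x hx; rcases List.mem_cons.1 hx with h | h
      · rw [h]; exact he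
      · exact hmem x h
    · intro i h
      match i with
      | 0 =>
        have h0 : 0 < q.length := by
          cases q with | nil => exact absurd rfl hne | cons a b => simp
        simpa using (hfst h0).symm
      | Nat.succ j =>
        have hj : j + 1 < q.length := by simpa using h
        have := hchain j hj
        simpa using this
    · intro h
      have h0 : 0 < q.length := by
        cases q with | nil => exact absurd rfl hne | cons a b => simp
      have hl := hlst h0
      simp only [List.get_eq_getElem, List.length_cons, Nat.add_sub_cancel] at hl ⊢
      rw [List.getElem_cons, dif_neg (Nat.pos_iff_ne_zero.mp h0)]
      exact hl

theorem W_edges {N : Network V ε} {u v : V} {p : List ε} (h : W N u v p) :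
    ∀ e ∈ p, e ∈ N.edges := (isWalk_of_W h).2.1

theorem W_ne_nil {N : Network V ε} {u v : V} {p : List ε} (h : W N u v p) :
    p ≠ [] := by cases h <;> simp

theorem W_start {N : Network V ε} {u v : V} {e : ε} {p : List ε}
    (h : W N u v (e :: p)) : u = N.tail e := by cases h <;> rfl

theorem W_append {N : Network V ε} {u v w : V} {p q : List ε}
    (hp : W N u v p) (hq : W N v w q) : W N u w (p ++ q) := by
  induction hp with
  | single e he => exact W.cons e q w he hq
  | cons e r x he hr ih => exact W.cons e (r ++ q) w he (ih hq)

theorem W_cons_inv {N : Network V ε} {u v : V} {e : ε} {p : List ε}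
    (h : W N u v (e :: p)) :
    e ∈ N.edges ∧ u = N.tail e ∧ ((p = [] ∧ v = N.head e) ∨ W N (N.head e) v p) := by
  cases h with
  | single e he => exact ⟨he, rfl, Or.inl ⟨rfl, rfl⟩⟩
  | cons e q w he hw => exact ⟨he, rfl, Or.inr hw⟩

theorem W_split {N : Network V ε} {u v : V} {p q : List ε}
    (h : W N u v (p ++ q)) (hq : q ≠ []) :
    ∃ m, (p = [] ∧ m = u ∨ W N u m p) ∧ W N m v q := by
  induction p generalizing u with
  | nil => exact ⟨u, Or.inl ⟨rfl, rfl⟩, h⟩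
  | cons e r ih =>
    rw [List.cons_append] at h
    obtain ⟨he, hu, hrest⟩ := W_cons_inv h
    rcases hrest with ⟨hnil, -⟩ | hw
    · exact absurd (List.append_eq_nil_iff.1 hnil).2 hq
    · obtain ⟨m, hm1, hm2⟩ := ih hw
      rcases hm1 with ⟨hr0, hm⟩ | hww
      · subst hr0; subst hm
        exact ⟨N.head e, Or.inr (by rw [hu]; exact W.single e he), hm2⟩
      · exact ⟨m, Or.inr (by rw [hu]; exact W.cons e r m he hww), hm2⟩



theorem shorter_closed {N : Network V ε} {u : V} {p : List ε}
    (h : W N u u p) {i j : ℕ} (hij : i < j) (hj : j < p.length)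
    (heq : p[i]'(lt_trans hij hj) = p[j]'hj) :
    ∃ (q : List ε) (m : V), W N m m q ∧ q.length < p.length := by
  have hi : i < p.length := lt_trans hij hj
  have h1 : W N u u (p.take i ++ p.drop i) := by rwa [List.take_append_drop]
  obtain ⟨m1, -, h2⟩ := W_split h1 (by
    intro h0; rw [List.drop_eq_nil_iff] at h0; omega)
  have hm1 : m1 = N.tail (p[i]'hi) := by
    rw [List.drop_eq_getElem_cons hi] at h2; exact W_start h2
  set seg := (p.drop i).take (j - i) with hseg
  have hlenseg : seg.length = j - i := by
    simp [hseg, List.length_take, List.length_drop]; omega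
  have hsplit : p.drop i = seg ++ p.drop j := by
    conv_lhs => rw [← List.take_append_drop (j - i) (p.drop i)]
    congr 1
    rw [List.drop_drop]
    congr 1
    omega
  rw [hsplit] at h2
  obtain ⟨m2, hseg', h3⟩ := W_split h2 (by
    intro h0; rw [List.drop_eq_nil_iff] at h0; omega)
  have hm2 : m2 = N.tail (p[j]'hj) := by
    rw [List.drop_eq_getElem_cons hj] at h3; exact W_start h3
  have hsegne : seg ≠ [] := by
    intro h0; rw [h0] at hlenseg; simp at hlenseg; omega
  rcases hseg' with ⟨h0, -⟩ | hw
  · exact absurd h0 hsegne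
  · have hmm : m2 = m1 := by rw [hm1, hm2, heq]
    exact ⟨seg, m1, hmm ▸ hw, by omega⟩

theorem no_closed_aux {N : Network V ε} (hA : N.Acyclic) :
    ∀ n p (u : V), p.length ≤ n → W N u u p → False := by
  intro n
  induction n with
  | zero =>
    intro p u hlen h
    have := W_ne_nil h
    cases p with
    | nil => exact this rfl
    | cons a b => simp at hlen
  | succ n ih =>
    intro p u hlen h
    by_cases hnd : p.Nodup
    · exact hA p ⟨u, isWalk_of_W h, hnd⟩
    · rw [List.nodup_iff_injective_get] at hnd
      simp only [Function.Injective, not_forall] at hnd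
      obtain ⟨a, b, hab, hne⟩ := hnd
      have hab' : p[(a : ℕ)] = p[(b : ℕ)] := hab
      rcases lt_or_gt_of_ne (fun h' => hne (Fin.ext h')) with hlt | hlt
      · obtain ⟨q, m, hq, hql⟩ := shorter_closed h hlt b.isLt hab'
        exact ih q m (by omega) hq
      · obtain ⟨q, m, hq, hql⟩ := shorter_closed h hlt a.isLt hab'.symm
        exact ih q m (by omega) hq

theorem no_closed {N : Network V ε} (hA : N.Acyclic) {u : V} {p : List ε}
    (h : W N u u p) : False :=
  no_closed_aux hA p.length p u le_rfl h

theorem cross_exists {N : Network V ε} {S : V → Prop} {u v : V} {p : List ε}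
    (h : W N u v p) : S u → ¬ S v →
    ∃ f ∈ p, S (N.tail f) ∧ ¬ S (N.head f) := by
  induction h with
  | single e he => exact fun hu hv => ⟨e, by simp, hu, hv⟩
  | cons e q w he hq ih =>
    intro hu hv
    by_cases hh : S (N.head e)
    · obtain ⟨f, hf, h1, h2⟩ := ih hh hv
      exact ⟨f, by simp [hf], h1, h2⟩
    · exact ⟨e, by simp, hu, hh⟩

theorem no_return {N : Network V ε} {S : V → Prop}
    (hS : ∀ f ∈ N.edges, S (N.head f) → S (N.tail f)) {u v : V} {p : List ε}
    (h : W N u v p) (hu : ¬ S u) : ∀ f ∈ p, ¬ S (N.tail f) := by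
  induction h with
  | single e he => intro f hf; rw [List.mem_singleton] at hf; subst hf; exact hu
  | cons e q w he hq ih =>
    have hh : ¬ S (N.head e) := fun h' => hu (hS e he h')
    intro f hf
    rcases List.mem_cons.1 hf with rfl | hf
    · exact hu
    · exact ih hh f hf

theorem cross_unique {N : Network V ε} {S : V → Prop}
    (hS : ∀ f ∈ N.edges, S (N.head f) → S (N.tail f)) {u v : V} {p : List ε}
    (h : W N u v p) :
    ∀ f₁ ∈ p, ∀ f₂ ∈ p, S (N.tail f₁) → ¬ S (N.head f₁) →
      S (N.tail f₂) → ¬ S (N.head f₂) → f₁ = f₂ := by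
  induction h with
  | single e he =>
    intro f₁ h₁ f₂ h₂ _ _ _ _
    rw [List.mem_singleton] at h₁ h₂; rw [h₁, h₂]
  | cons e q w he hq ih =>
    intro f₁ h₁ f₂ h₂ a₁ b₁ a₂ b₂
    rcases List.mem_cons.1 h₁ with he₁ | hm₁
    · rcases List.mem_cons.1 h₂ with he₂ | hm₂
      · rw [he₁, he₂]
      · exact absurd a₂ (no_return hS hq (he₁ ▸ b₁) f₂ hm₂)
    · rcases List.mem_cons.1 h₂ with he₂ | hm₂
      · exact absurd a₁ (no_return hS hq (he₂ ▸ b₂) f₁ hm₁)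
      · exact ih f₁ hm₁ f₂ hm₂ a₁ b₁ a₂ b₂

theorem flowList_nodup {M : Network V ε} {fs : List (List ε)}
    (hf : M.IsFlowList fs) : fs.Nodup := by
  refine List.Pairwise.imp_of_mem ?_ hf.2
  intro a b ha hb hR hEq
  have hane : a ≠ [] := ((hf.1 a ha).1).1
  obtain ⟨x, hx⟩ := List.exists_mem_of_ne_nil a hane
  exact hR x hx (hEq ▸ hx)

theorem flowList_disj {M : Network V ε} {fs : List (List ε)}
    (hf : M.IsFlowList fs) {a b : List ε} (ha : a ∈ fs) (hb : b ∈ fs)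
    (hne : a ≠ b) : ∀ x ∈ a, x ∉ b := by
  have hsymm : Symmetric fun (p q : List ε) => ∀ e ∈ p, e ∉ q := by
    intro p q h x hx hxp
    exact h x hxp hx
  haveI : Std.Symm fun (p q : List ε) => ∀ e ∈ p, e ∉ q := ⟨fun _ _ h => hsymm h⟩
  exact List.Pairwise.forall hf.2 ha hb hne

theorem flowList_length_le {M : Network V ε} {fs : List (List ε)}
    (hf : M.IsFlowList fs) (T : Finset ε) (g : List ε → ε)
    (hg : ∀ q ∈ fs, g q ∈ q ∧ g q ∈ T) : fs.length ≤ T.card := by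
  have hnd : fs.Nodup := flowList_nodup hf
  rw [← List.toFinset_card_of_nodup hnd]
  refine Finset.card_le_card_of_injOn g
    (fun q hq => (hg q (List.mem_toFinset.mp hq)).2) ?_
  intro q₁ h₁ q₂ h₂ heq
  by_contra hne
  rw [Finset.mem_coe, List.mem_toFinset] at h₁ h₂
  exact flowList_disj hf h₁ h₂ hne (g q₁) (hg q₁ h₁).1 (heq ▸ (hg q₂ h₂).1)

theorem W_del_iff {N : Network V ε} {F : Finset ε} {u v : V} {p : List ε} :
    W (N.del F) u v p ↔ W N u v p ∧ ∀ e ∈ p, e ∉ F := by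
  constructor
  · intro h
    induction h with
    | single e he =>
      have he : e ∈ N.edges ∧ e ∉ F := Finset.mem_sdiff.mp he
      exact ⟨W.single e he.1, by simpa using he.2⟩
    | cons e q w he hq ih =>
      have he : e ∈ N.edges ∧ e ∉ F := Finset.mem_sdiff.mp he
      refine ⟨W.cons e q w he.1 ih.1, ?_⟩
      intro f hf
      rcases List.mem_cons.1 hf with rfl | hf
      · exact he.2
      · exact ih.2 f hf
  · rintro ⟨h, hF⟩
    induction h with
    | single e he =>
      exact W.single (N := N.del F) e (Finset.mem_sdiff.mpr ⟨he, hF e (by simp)⟩)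
    | cons e q w he hq ih =>
      exact W.cons (N := N.del F) e q w (Finset.mem_sdiff.mpr ⟨he, hF e (by simp)⟩)
        (ih fun f hf => hF f (by simp [hf]))

theorem hasFlow_zero (M : Network V ε) : M.HasFlow 0 :=
  ⟨[], ⟨by simp, List.Pairwise.nil⟩, rfl⟩

theorem hasFlow_bddAbove (M : Network V ε) : BddAbove {n | M.HasFlow n} := by
  refine ⟨M.edges.card, ?_⟩
  rintro n ⟨fs, hf, rfl⟩
  cases fs with
  | nil => simp
  | cons a as =>
    have hane : a ≠ [] := ((hf.1 a (by simp)).1).1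
    obtain ⟨x, -⟩ := List.exists_mem_of_ne_nil a hane
    haveI : Inhabited ε := ⟨x⟩
    refine flowList_length_le hf M.edges (fun q => q.head!) ?_
    intro q hq
    have hne : q ≠ [] := ((hf.1 q hq).1).1
    have hmem : q.head! ∈ q := List.head!_mem_self hne
    exact ⟨hmem, ((hf.1 q hq).1).2.1 _ hmem⟩

end Network

open Network

/-- In an acyclic network that decomposes into `C_N(s,t)` edge-disjoint `s`-`t`
paths, deleting any single edge decreases the max flow by exactly 1. -/
theorem del_single_edge_of_decomposition {V ε : Type} [DecidableEq ε]
    (N : Network V ε) (hA : N.Acyclic)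
    (ps : List (List ε)) (hlen : ps.length = N.maxFlow)
    (hflow : N.IsFlowList ps)
    (hcover : ∀ e ∈ N.edges, ∃ p ∈ ps, e ∈ p) :
    ∀ e ∈ N.edges, (N.del {e}).maxFlow + 1 = N.maxFlow := by
  intro e he
  classical
  obtain ⟨p₀, hp₀, hep₀⟩ := hcover e he
  have hWps : ∀ p ∈ ps, W N N.s N.t p := fun p hp => W_of_isWalk (hflow.1 p hp).1
  set S : V → Prop := fun x => x = N.tail e ∨ ∃ q, W N x (N.tail e) q with hSdef
  have hS : ∀ f ∈ N.edges, S (N.head f) → S (N.tail f) := by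
    intro f hf hsf
    rcases hsf with h1 | ⟨q, hq⟩
    · exact Or.inr ⟨[f], h1 ▸ W.single f hf⟩
    · exact Or.inr ⟨f :: q, W.cons f q _ hf hq⟩
  have hhead : ¬ S (N.head e) := by
    rintro (h1 | ⟨q, hq⟩)
    · exact no_closed hA (show W N (N.tail e) (N.tail e) [e] from h1 ▸ W.single e he)
    · exact no_closed hA (W.cons e q _ he hq)
  have htail : S (N.tail e) := Or.inl rfl
  obtain ⟨a, c, hp₀eq⟩ := List.append_of_mem hep₀
  have hw₀ := hWps p₀ hp₀
  rw [hp₀eq] at hw₀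
  obtain ⟨m, hm1, hm2⟩ := W_split hw₀ (by simp)
  have hmte : m = N.tail e := W_start hm2
  have hSs : S N.s := by
    rcases hm1 with ⟨-, hms⟩ | hwa
    · exact Or.inl (by rw [← hms, hmte])
    · exact Or.inr ⟨a, hmte ▸ hwa⟩
  have hSt : ¬ S N.t := by
    rintro (h1 | ⟨q, hq⟩)
    · exact no_closed hA (h1 ▸ hmte ▸ hm2)
    · exact no_closed hA (W_append (hmte ▸ hm2) hq)
  set cutE : Finset ε := N.edges.filter (fun f => S (N.tail f) ∧ ¬ S (N.head f)) with hcut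
  have he_cut : e ∈ cutE := Finset.mem_filter.mpr ⟨he, htail, hhead⟩
  have hcard : cutE.card ≤ ps.length := by
    have hch : ∀ f, ∃ p, f ∈ cutE → p ∈ ps ∧ f ∈ p := by
      intro f
      by_cases hf : f ∈ cutE
      · obtain ⟨p, hp, hfp⟩ := hcover f (Finset.mem_filter.mp hf).1
        exact ⟨p, fun _ => ⟨hp, hfp⟩⟩
      · exact ⟨[], fun h => absurd h hf⟩
    choose φ hφ' using hch
    calc cutE.card ≤ ps.toFinset.card := by
          refine Finset.card_le_card_of_injOn φ
            (fun f hf => List.mem_toFinset.mpr (hφ' f hf).1) ?_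
          intro f₁ h₁ f₂ h₂ heq
          rw [Finset.mem_coe] at h₁ h₂
          obtain ⟨hp₁, hf₁⟩ := hφ' f₁ h₁
          obtain ⟨hp₂, hf₂⟩ := hφ' f₂ h₂
          rw [heq] at hf₁
          have c₁ := Finset.mem_filter.mp h₁
          have c₂ := Finset.mem_filter.mp h₂
          exact cross_unique hS (hWps _ hp₂) f₁ hf₁ f₂ hf₂ c₁.2.1 c₁.2.2 c₂.2.1 c₂.2.2
      _ ≤ ps.length := ps.toFinset_card_le
  have hub : ∀ n ∈ {n | (N.del {e}).HasFlow n}, n ≤ ps.length - 1 := by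
    rintro n ⟨fs, hfs, rfl⟩
    have hgex : ∀ q, ∃ f, q ∈ fs → f ∈ q ∧ f ∈ cutE.erase e := by
      intro q
      by_cases hq : q ∈ fs
      · have hwq : W (N.del {e}) N.s N.t q := W_of_isWalk (hfs.1 q hq).1
        obtain ⟨hwN, hnotF⟩ := W_del_iff.mp hwq
        obtain ⟨f, hfq, hf1, hf2⟩ := cross_exists hwN hSs hSt
        refine ⟨f, fun _ => ⟨hfq, Finset.mem_erase.mpr ⟨?_,
          Finset.mem_filter.mpr ⟨W_edges hwN f hfq, hf1, hf2⟩⟩⟩⟩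
        exact fun hfe => (hnotF f hfq) (by simp [hfe])
      · exact ⟨e, fun h => absurd h hq⟩
    choose g hg using hgex
    have hlen' := flowList_length_le hfs (cutE.erase e) g (fun q hq => hg q hq)
    have hce : (cutE.erase e).card = cutE.card - 1 := Finset.card_erase_of_mem he_cut
    have hc1 : 1 ≤ cutE.card := Finset.card_pos.mpr ⟨e, he_cut⟩
    omega
  have hub' : (N.del {e}).maxFlow ≤ ps.length - 1 :=
    csSup_le ⟨0, hasFlow_zero _⟩ hub
  have hndps : ps.Nodup := flowList_nodup hflow
  have hlow : (N.del {e}).HasFlow (ps.length - 1) := by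
    refine ⟨ps.erase p₀, ⟨?_, List.Pairwise.sublist List.erase_sublist hflow.2⟩,
      by rw [List.length_erase_of_mem hp₀]⟩
    intro q hq
    have hqps : q ∈ ps := List.mem_of_mem_erase hq
    have hqne : q ≠ p₀ := ((List.Nodup.mem_erase_iff hndps).mp hq).1
    have hdisj := flowList_disj hflow hqps hp₀ hqne
    have heq' : e ∉ q := fun hh => hdisj e hh hep₀
    have hwq : W N N.s N.t q := hWps q hqps
    have hwdel : W (N.del {e}) N.s N.t q :=
      W_del_iff.mpr ⟨hwq, fun f hf => by
        simp only [Finset.mem_singleton]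
        rintro rfl
        exact heq' hf⟩
    exact ⟨isWalk_of_W hwdel, (hflow.1 q hqps).2⟩
  have hlb : ps.length - 1 ≤ (N.del {e}).maxFlow :=
    le_csSup (hasFlow_bddAbove _) hlow
  have hpos : 0 < ps.length := List.length_pos_iff.mpr (List.ne_nil_of_mem hp₀)
  rw [← hlen]
  omega
end

section
/- Let N=(V,E,s,t) be an acyclic unit-capacity point-to-point network and let e be an edge lying on some directed s-t path. Then e belongs to no capacity factor of N (i.e., e is in the H-set) if and only if for every s-t path p containing e, C_{N\p}(s,t) ≤ C_N(s,t) − 2. -/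
set_option linter.unusedSectionVars false


open Network

namespace Network

variable {V ε : Type} [DecidableEq ε] {N : Network V ε}

lemma length_le_flatten_length (fs : List (List ε)) (h : ∀ p ∈ fs, p ≠ []) :
    fs.length ≤ fs.flatten.length := by
  induction fs with
  | nil => simp
  | cons p fs ih =>
    simp only [List.flatten_cons, List.length_cons, List.length_append]
    have hp : 1 ≤ p.length := by
      have := h p (by simp)
      exact List.length_pos_iff.mpr this
    have := ih (fun q hq => h q (by simp [hq]))
    omega

lemma flowList_length_le_s5 (fs : List (List ε)) (h : N.IsFlowList fs) :
    fs.length ≤ N.edges.card := by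
  have hnd : fs.flatten.Nodup := by
    rw [List.nodup_flatten]
    exact ⟨fun q hq => (h.1 q hq).2, h.2.imp (fun {a b} hab => hab)⟩
  have hsub : fs.flatten.toFinset ⊆ N.edges := by
    intro x hx
    rw [List.mem_toFinset] at hx
    obtain ⟨q, hq, hxq⟩ := List.mem_flatten.mp hx
    exact (h.1 q hq).1.2.1 x hxq
  have h1 : fs.length ≤ fs.flatten.length :=
    length_le_flatten_length fs (fun q hq => (h.1 q hq).1.1)
  have h2 : fs.flatten.length = fs.flatten.toFinset.card :=
    (List.toFinset_card_of_nodup hnd).symm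
  calc fs.length ≤ fs.flatten.length := h1
    _ = fs.flatten.toFinset.card := h2
    _ ≤ N.edges.card := Finset.card_le_card hsub

lemma hasFlow_zero_s5 : N.HasFlow 0 := ⟨[], ⟨by simp, by simp⟩, rfl⟩

lemma bddAbove_hasFlow : BddAbove {n | N.HasFlow n} :=
  ⟨N.edges.card, fun n hn => by
    obtain ⟨fs, hfs, hlen⟩ := hn
    exact hlen ▸ flowList_length_le_s5 fs hfs⟩

lemma hasFlow_maxFlow : N.HasFlow N.maxFlow := by
  have h : N.maxFlow ∈ {n | N.HasFlow n} :=
    Nat.sSup_mem ⟨0, (hasFlow_zero_s5 : N.HasFlow 0)⟩ bddAbove_hasFlow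
  exact h

lemma le_maxFlow {n : ℕ} (h : N.HasFlow n) : n ≤ N.maxFlow :=
  le_csSup bddAbove_hasFlow h

lemma del_empty : N.del ∅ = N := by
  cases N; simp [del]

lemma isWalk_del_iff {F : Finset ε} {u v : V} {p : List ε} :
    (N.del F).IsWalk u v p ↔ N.IsWalk u v p ∧ ∀ x ∈ p, x ∉ F := by
  constructor
  · rintro ⟨h1, h2, h3, h4, h5⟩
    exact ⟨⟨h1, fun x hx => (Finset.mem_sdiff.mp (h2 x hx)).1, h3, h4, h5⟩,
      fun x hx => (Finset.mem_sdiff.mp (h2 x hx)).2⟩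
  · rintro ⟨⟨h1, h2, h3, h4, h5⟩, h6⟩
    exact ⟨h1, fun x hx => Finset.mem_sdiff.mpr ⟨h2 x hx, h6 x hx⟩, h3, h4, h5⟩

lemma isPath_del_iff {F : Finset ε} {p : List ε} :
    (N.del F).IsPath p ↔ N.IsPath p ∧ ∀ x ∈ p, x ∉ F := by
  unfold IsPath
  rw [show (N.del F).s = N.s from rfl, show (N.del F).t = N.t from rfl, isWalk_del_iff]
  tauto

lemma isFlowList_del_iff {F : Finset ε} {fs : List (List ε)} :
    (N.del F).IsFlowList fs ↔ N.IsFlowList fs ∧ ∀ q ∈ fs, ∀ x ∈ q, x ∉ F := by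
  unfold IsFlowList
  constructor
  · rintro ⟨h1, h2⟩
    exact ⟨⟨fun q hq => (isPath_del_iff.mp (h1 q hq)).1, h2⟩,
      fun q hq => (isPath_del_iff.mp (h1 q hq)).2⟩
  · rintro ⟨⟨h1, h2⟩, h3⟩
    exact ⟨fun q hq => isPath_del_iff.mpr ⟨h1 q hq, h3 q hq⟩, h2⟩

lemma maxFlow_del_le_del {F F' : Finset ε} (h : F' ⊆ F) :
    (N.del F).maxFlow ≤ (N.del F').maxFlow := by
  obtain ⟨fs, hfs, hlen⟩ := hasFlow_maxFlow (N := N.del F)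
  apply le_maxFlow
  rw [isFlowList_del_iff] at hfs
  exact ⟨fs, isFlowList_del_iff.mpr
    ⟨hfs.1, fun q hq x hx hxF' => hfs.2 q hq x hx (h hxF')⟩, hlen⟩

lemma maxFlow_del_le (F : Finset ε) : (N.del F).maxFlow ≤ N.maxFlow := by
  have := maxFlow_del_le_del (N := N) (Finset.empty_subset F)
  rwa [del_empty] at this

lemma maxFlow_del_path_add_one_le {p : List ε} (hp : N.IsPath p) :
    (N.del p.toFinset).maxFlow + 1 ≤ N.maxFlow := by
  obtain ⟨fs, hfs, hlen⟩ := hasFlow_maxFlow (N := N.del p.toFinset)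
  rw [isFlowList_del_iff] at hfs
  apply le_maxFlow
  refine ⟨p :: fs, ⟨?_, ?_⟩, by simp [hlen]⟩
  · intro q hq
    rcases List.mem_cons.mp hq with rfl | h
    · exact hp
    · exact hfs.1.1 q h
  · rw [List.pairwise_cons]
    exact ⟨fun q hq x hx hxq => hfs.2 q hq x hxq (List.mem_toFinset.mpr hx), hfs.1.2⟩

lemma isWalk_ofFn (f : ℕ → ε) (m : ℕ) (hm : 0 < m)
    (hE : ∀ k, k < m → f k ∈ N.edges)
    (hC : ∀ k, k + 1 < m → N.head (f k) = N.tail (f (k + 1))) :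
    N.IsWalk (N.tail (f 0)) (N.head (f (m - 1))) (List.ofFn (fun k : Fin m => f k)) := by
  have hlen : (List.ofFn (fun k : Fin m => f k)).length = m := List.length_ofFn
  have hget : ∀ (i : ℕ) (h : i < (List.ofFn (fun k : Fin m => f k)).length),
      (List.ofFn (fun k : Fin m => f k)).get ⟨i, h⟩ = f i := by
    intro i h
    rw [List.get_ofFn]
    rfl
  refine ⟨?_, ?_, ?_, ?_, ?_⟩
  · intro hnil
    rw [hnil] at hlen
    simp at hlen
    omega
  · intro x hx
    rw [List.mem_ofFn] at hx
    obtain ⟨k, rfl⟩ := hx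
    exact hE k k.2
  · intro i h
    rw [hget, hget]
    exact hC i (by omega)
  · intro h
    rw [hget]
  · intro h
    rw [hget]
    rw [hlen]

lemma acyclic_no_closed_walk (hA : N.Acyclic) :
    ∀ (n : ℕ) (u : V) (w : List ε), w.length = n → ¬ N.IsWalk u u w := by
  intro n
  induction n using Nat.strong_induction_on with
  | _ n ih =>
    intro u w hlen hW
    by_cases hnd : w.Nodup
    · exact hA w ⟨u, hW, hnd⟩
    rw [List.nodup_iff_injective_get] at hnd
    obtain ⟨a, b, hab, hne⟩ := Function.not_injective_iff.mp hnd
    obtain ⟨i, j, hij, hgeteq⟩ : ∃ i j : Fin w.length, (i : ℕ) < j ∧ w.get i = w.get j := by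
      rcases lt_or_gt_of_ne (fun h => hne (Fin.ext h) : (a : ℕ) ≠ b) with h | h
      · exact ⟨a, b, h, hab⟩
      · exact ⟨b, a, h, hab.symm⟩
    have hwpos : 0 < w.length := lt_of_le_of_lt (Nat.zero_le _) j.2
    set d : ε := w.get ⟨0, hwpos⟩ with hd
    set f : ℕ → ε := fun k => w.getD (i + k) d with hf
    have fval : ∀ (k : ℕ) (h : (i : ℕ) + k < w.length), f k = w.get ⟨(i : ℕ) + k, h⟩ := by
      intro k h
      simp only [hf]
      exact List.getD_eq_get w d ⟨_, h⟩
    obtain ⟨hW1, hW2, hW3, hW4, hW5⟩ := hW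
    set m : ℕ := (j : ℕ) - i with hm
    have hj : (j : ℕ) < w.length := j.2
    have hm1 : 0 < m := by omega
    have hE : ∀ k, k < m → f k ∈ N.edges := by
      intro k hk
      have h : (i : ℕ) + k < w.length := by omega
      rw [fval k h]
      exact hW2 _ (w.get_mem _)
    have hC : ∀ k, k + 1 < m → N.head (f k) = N.tail (f (k + 1)) := by
      intro k hk
      have h1 : (i : ℕ) + k + 1 < w.length := by omega
      rw [fval k (by omega)]
      rw [show f (k+1) = w.get ⟨(i : ℕ) + k + 1, h1⟩ from by
        rw [fval (k+1) (by omega)]; congr 1]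
      exact hW3 ((i : ℕ) + k) h1
    have hwalk := isWalk_ofFn (N := N) f m hm1 hE hC
    have hend : N.head (f (m - 1)) = N.tail (f 0) := by
      have h1 : (i : ℕ) + (m - 1) + 1 < w.length := by omega
      have h2 := hW3 ((i : ℕ) + (m - 1)) h1
      have e1 : w.get ⟨(i : ℕ) + (m - 1) + 1, h1⟩ = w.get i := by
        rw [show (⟨(i : ℕ) + (m - 1) + 1, h1⟩ : Fin w.length) = j from
          Fin.ext (by simp only [hm]; omega)]
        exact hgeteq.symm
      have h0 : (i : ℕ) + 0 < w.length := by omega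
      have e2 : w.get ⟨(i : ℕ) + 0, h0⟩ = w.get i := by
        rw [show (⟨(i : ℕ) + 0, h0⟩ : Fin w.length) = i from Fin.ext (by simp)]
      rw [fval (m-1) (by omega), h2, e1, fval 0 h0, e2]
    rw [hend] at hwalk
    exact ih m (by omega) _ _ (List.length_ofFn) hwalk

lemma isWalk_cons {a b : V} {x : ε} {rest : List ε} (h : N.IsWalk a b (x :: rest)) :
    N.tail x = a ∧ x ∈ N.edges ∧
      (rest = [] → N.head x = b) ∧ (rest ≠ [] → N.IsWalk (N.head x) b rest) := by
  obtain ⟨h1, h2, h3, h4, h5⟩ := h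
  have hx0 : (x :: rest).get ⟨0, by simp⟩ = x := rfl
  refine ⟨by have := h4 (by simp); rwa [hx0] at this, h2 x (by simp), ?_, ?_⟩
  · intro hr
    subst hr
    have := h5 (by simp)
    simpa using this
  · intro hr
    have hlen : 0 < rest.length := List.length_pos_iff.mpr hr
    refine ⟨hr, fun y hy => h2 y (by simp [hy]), ?_, ?_, ?_⟩
    · intro k hk
      exact h3 (k + 1) (by simpa using Nat.succ_lt_succ hk)
    · intro hpos
      have := h3 0 (by simpa using Nat.succ_lt_succ hpos)
      rw [hx0] at this
      exact this.symm
    · intro hpos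
      have := h5 (by simp)
      have hcast : (x :: rest).get ⟨(x :: rest).length - 1, by simp⟩
          = rest.get ⟨rest.length - 1, Nat.sub_lt hpos Nat.one_pos⟩ := by
        have heq : (x :: rest).length - 1 = (rest.length - 1) + 1 := by
          simp
          omega
        rw [show (⟨(x :: rest).length - 1, by simp⟩ : Fin (x :: rest).length)
            = ⟨(rest.length - 1) + 1, by simp; omega⟩ from Fin.ext heq]
        rfl
      rwa [hcast] at this

lemma walk_tail_head_multiset {b : V} :
    ∀ {q : List ε} {a : V}, N.IsWalk a b q →
      (↑(q.map N.tail) : Multiset V) + {b} = (↑(q.map N.head) : Multiset V) + {a} := by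
  intro q
  induction q with
  | nil => intro a h; exact absurd rfl h.1
  | cons x rest ih =>
    intro a h
    obtain ⟨hta, hxE, hnil, hcons⟩ := isWalk_cons h
    by_cases hr : rest = []
    · subst hr
      have hb := hnil rfl
      simp only [List.map_cons, List.map_nil, ← Multiset.cons_coe, Multiset.coe_nil, hb, ← hta]
      rw [← Multiset.singleton_add, ← Multiset.singleton_add]
      exact add_comm _ _
    · have hih := ih (hcons hr)
      rw [List.map_cons, List.map_cons, ← Multiset.cons_coe, ← Multiset.cons_coe,
        Multiset.cons_add, Multiset.cons_add, hih, hta,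
        add_comm (↑(rest.map N.head) : Multiset V) ({N.head x} : Multiset V),
        add_comm (↑(rest.map N.head) : Multiset V) ({a} : Multiset V),
        Multiset.singleton_add, Multiset.singleton_add]
      exact Multiset.cons_swap _ _ _

lemma flow_tail_head_multiset {fs : List (List ε)} (h : ∀ q ∈ fs, N.IsWalk N.s N.t q) :
    (↑(fs.flatten.map N.tail) : Multiset V) + fs.length • ({N.t} : Multiset V)
      = (↑(fs.flatten.map N.head) : Multiset V) + fs.length • ({N.s} : Multiset V) := by
  classical
  induction fs with
  | nil => simp
  | cons q fs ih =>
    have h1 := walk_tail_head_multiset (N := N) (h q (by simp))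
    have h2 := ih (fun r hr => h r (by simp [hr]))
    apply Multiset.ext.mpr
    intro v
    have e1 := congrArg (Multiset.count v) h1
    have e2 := congrArg (Multiset.count v) h2
    simp only [List.flatten_cons, List.map_append, ← Multiset.coe_add, List.length_cons,
      Multiset.count_add, Multiset.count_nsmul, Multiset.count_singleton] at e1 e2 ⊢
    split_ifs at e1 e2 ⊢ <;> omega

lemma flowList_flatten_nodup {fs : List (List ε)} (h : N.IsFlowList fs) :
    fs.flatten.Nodup := by
  rw [List.nodup_flatten]
  exact ⟨fun q hq => (h.1 q hq).2, h.2.imp (fun {a b} hab => hab)⟩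

lemma no_max_flow_avoiding (hA : N.Acyclic) {fs hs : List (List ε)} {e : ε}
    (hf : N.IsFlowList fs) (hh : N.IsFlowList hs) (hlen : hs.length = fs.length)
    (hsub : ∀ x ∈ hs.flatten, x ∈ fs.flatten)
    (hef : e ∈ fs.flatten) (heh : e ∉ hs.flatten) : False := by
  classical
  have hndf := flowList_flatten_nodup hf
  have hndh := flowList_flatten_nodup hh
  have hle : (↑hs.flatten : Multiset ε) ≤ (↑fs.flatten : Multiset ε) := by
    rw [Multiset.le_iff_count]
    intro x
    by_cases hx : x ∈ hs.flatten
    · have h1 : (↑hs.flatten : Multiset ε).count x ≤ 1 := by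
        rw [Multiset.coe_count]
        exact List.nodup_iff_count_le_one.mp hndh x
      have h2 : 1 ≤ (↑fs.flatten : Multiset ε).count x :=
        Multiset.one_le_count_iff_mem.mpr (hsub x hx)
      omega
    · rw [Multiset.coe_count, List.count_eq_zero.mpr hx]
      exact Nat.zero_le _
  set W : Multiset ε := (↑fs.flatten : Multiset ε) - ↑hs.flatten with hWdef
  have hWadd : (↑hs.flatten : Multiset ε) + W = ↑fs.flatten := add_tsub_cancel_of_le hle
  have heW : e ∈ W := by
    rw [← Multiset.one_le_count_iff_mem, hWdef, Multiset.count_sub]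
    have h2 : 1 ≤ Multiset.count e (↑fs.flatten : Multiset ε) :=
      Multiset.one_le_count_iff_mem.mpr hef
    have h3 : Multiset.count e (↑hs.flatten : Multiset ε) = 0 :=
      Multiset.count_eq_zero.mpr (by simpa using heh)
    omega
  have hWE : ∀ x ∈ W, x ∈ fs.flatten := by
    intro x hx
    have : x ∈ (↑fs.flatten : Multiset ε) := by
      rw [← hWadd]
      exact Multiset.mem_add.mpr (Or.inr hx)
    simpa using this
  have hmaps : W.map N.tail = W.map N.head := by
    have h1 := flow_tail_head_multiset (N := N) (fs := fs) (fun q hq => (hf.1 q hq).1)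
    have h2 := flow_tail_head_multiset (N := N) (fs := hs) (fun q hq => (hh.1 q hq).1)
    have key : ∀ g : ε → V, (↑(fs.flatten.map g) : Multiset V)
        = ↑(hs.flatten.map g) + W.map g := by
      intro g
      rw [← Multiset.map_coe, ← Multiset.map_coe, ← Multiset.map_add, hWadd]
    rw [key N.tail, key N.head] at h1
    rw [hlen] at h2
    apply Multiset.ext.mpr
    intro v
    have e1 := congrArg (Multiset.count v) h1
    have e2 := congrArg (Multiset.count v) h2
    simp only [Multiset.count_add, Multiset.count_nsmul, Multiset.count_singleton] at e1 e2 ⊢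
    split_ifs at e1 e2 ⊢ <;> omega
  have hstep : ∀ g ∈ W, ∃ g' ∈ W, N.tail g' = N.head g := by
    intro g hg
    have : N.head g ∈ W.map N.tail := by
      rw [hmaps]
      exact Multiset.mem_map_of_mem _ hg
    obtain ⟨g', hg', he'⟩ := Multiset.mem_map.mp this
    exact ⟨g', hg', he'⟩
  let step : {x // x ∈ W} → {x // x ∈ W} := fun x =>
    ⟨(hstep x.1 x.2).choose, (hstep x.1 x.2).choose_spec.1⟩
  have hstep' : ∀ x : {x // x ∈ W}, N.tail (step x).1 = N.head x.1 := fun x =>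
    (hstep x.1 x.2).choose_spec.2
  let F : ℕ → {x // x ∈ W} := fun n => step^[n] ⟨e, heW⟩
  have hF : ∀ n, N.tail (F (n+1)).1 = N.head (F n).1 := by
    intro n
    have : F (n+1) = step (F n) := Function.iterate_succ_apply' step n _
    rw [this]
    exact hstep' _
  obtain ⟨i, -, j, -, hij, hFij⟩ :=
    Finset.exists_ne_map_eq_of_card_lt_of_maps_to
      (s := Finset.range (fs.flatten.toFinset.card + 1)) (t := fs.flatten.toFinset)
      (by simp) (fun n _ => List.mem_toFinset.mpr (hWE _ (F n).2))
  obtain ⟨i, j, hlt, hFeq⟩ : ∃ i j : ℕ, i < j ∧ (F i).1 = (F j).1 := by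
    rcases Nat.lt_or_ge i j with h | h
    · exact ⟨i, j, h, hFij⟩
    · exact ⟨j, i, lt_of_le_of_ne h (fun hh' => hij hh'.symm), hFij.symm⟩
  set m : ℕ := j - i with hm
  have hm1 : 0 < m := by omega
  have hwalk := isWalk_ofFn (N := N) (fun k => (F (i + k)).1) m hm1
    (fun k _ => by
      obtain ⟨q, hq, hxq⟩ := List.mem_flatten.mp (hWE _ (F (i + k)).2)
      exact (hf.1 q hq).1.2.1 _ hxq)
    (fun k hk => by
      show N.head (F (i + k)).1 = N.tail (F (i + (k + 1))).1
      rw [show i + (k + 1) = (i + k) + 1 from by omega]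
      exact (hF (i + k)).symm)
  have hend : N.head ((F (i + (m - 1))).1) = N.tail ((F (i + 0)).1) := by
    have h1 := hF (i + (m - 1))
    rw [show i + (m - 1) + 1 = j from by omega] at h1
    rw [← h1, show i + 0 = i from by omega, hFeq]
  rw [hend] at hwalk
  exact acyclic_no_closed_walk hA m _ _ (List.length_ofFn) hwalk

lemma exists_cf_of_critical {F : Finset ε} {e : ε} (heF : e ∈ F) (hFE : F ⊆ N.edges)
    (hdec : (N.del F).maxFlow < N.maxFlow)
    (hkeep : (N.del (F.erase e)).maxFlow = N.maxFlow) :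
    ∃ G, N.IsCF G ∧ e ∈ G := by
  classical
  set S : Finset (Finset ε) :=
    F.powerset.filter (fun G => e ∈ G ∧ (N.del G).maxFlow < N.maxFlow) with hS
  have hFS : F ∈ S := by
    rw [hS, Finset.mem_filter, Finset.mem_powerset]
    exact ⟨Finset.Subset.refl F, heF, hdec⟩
  obtain ⟨G, hGS, hGmin⟩ := Finset.exists_min_image S Finset.card ⟨F, hFS⟩
  rw [hS, Finset.mem_filter, Finset.mem_powerset] at hGS
  obtain ⟨hGF, heG, hGdec⟩ := hGS
  refine ⟨G, ⟨⟨e, heG⟩, hGF.trans hFE, hGdec, ?_⟩, heG⟩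
  intro F' hF'
  have hub : (N.del F').maxFlow ≤ N.maxFlow := maxFlow_del_le F'
  by_cases heF' : e ∈ F'
  · by_contra hne
    have hdec' : (N.del F').maxFlow < N.maxFlow := lt_of_le_of_ne hub hne
    have hF'S : F' ∈ S := by
      rw [hS, Finset.mem_filter, Finset.mem_powerset]
      exact ⟨hF'.subset.trans hGF, heF', hdec'⟩
    have h1 := hGmin F' hF'S
    have h2 := Finset.card_lt_card hF'
    omega
  · have hsub : F' ⊆ F.erase e := fun x hx =>
      Finset.mem_erase.mpr ⟨fun hxe => heF' (hxe ▸ hx), hGF (hF'.subset hx)⟩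
    have h1 := maxFlow_del_le_del (N := N) hsub
    rw [hkeep] at h1
    exact le_antisymm hub h1

end Network


/-- In an acyclic network, an edge `e` on some `s`-`t` path belongs to no
capacity factor iff every `s`-`t` path through `e` satisfies
`C_{N\p}(s,t) ≤ C_N(s,t) − 2`. -/
theorem mem_Hset_iff {V ε : Type} [DecidableEq ε]
    (N : Network V ε) (hA : N.Acyclic) (e : ε) (he : e ∈ N.edges)
    (hpath : ∃ p, N.IsPath p ∧ e ∈ p) :
    (∀ F, N.IsCF F → e ∉ F) ↔
      ∀ p, N.IsPath p → e ∈ p →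
        (N.del p.toFinset).maxFlow + 2 ≤ N.maxFlow := by
  classical
  constructor
  · -- H-set direction: e in no CF ⇒ every path through e drops flow by ≥ 2
    intro hH p hp hep
    by_contra hlt
    push_neg at hlt
    have hup := maxFlow_del_path_add_one_le hp
    obtain ⟨gs, hgs, hgslen⟩ := hasFlow_maxFlow (N := N.del p.toFinset)
    rw [isFlowList_del_iff] at hgs
    set fs : List (List ε) := p :: gs with hfsdef
    have hflow : N.IsFlowList fs := by
      constructor
      · intro q hq
        rcases List.mem_cons.mp hq with rfl | h
        · exact hp
        · exact hgs.1.1 q h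
      · rw [List.pairwise_cons]
        exact ⟨fun q hq x hx hxq => hgs.2 q hq x hxq (List.mem_toFinset.mpr hx), hgs.1.2⟩
    have hfslen : fs.length = N.maxFlow := by
      have : fs.length = gs.length + 1 := by simp [hfsdef]
      omega
    set U : Finset ε := fs.flatten.toFinset with hUdef
    set K : Finset ε := N.edges \ U with hKdef
    have heU : e ∈ fs.flatten := List.mem_flatten.mpr ⟨p, by simp [hfsdef], hep⟩
    have heK : e ∉ K := fun h => (Finset.mem_sdiff.mp h).2 (List.mem_toFinset.mpr heU)
    have hKflow : (N.del K).maxFlow = N.maxFlow := by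
      apply le_antisymm (maxFlow_del_le _)
      apply le_maxFlow
      refine ⟨fs, isFlowList_del_iff.mpr ⟨hflow, ?_⟩, hfslen⟩
      intro q hq x hxq hxK
      exact (Finset.mem_sdiff.mp hxK).2
        (List.mem_toFinset.mpr (List.mem_flatten.mpr ⟨q, hq, hxq⟩))
    have hKdec : (N.del (insert e K)).maxFlow < N.maxFlow := by
      rcases lt_or_eq_of_le (maxFlow_del_le (N := N) (insert e K)) with h | h
      · exact h
      · exfalso
        obtain ⟨hs, hhs, hhslen⟩ := hasFlow_maxFlow (N := N.del (insert e K))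
        rw [isFlowList_del_iff] at hhs
        refine no_max_flow_avoiding hA hflow hhs.1 (by rw [hhslen, h, hfslen]) ?_ heU ?_
        · intro x hx
          obtain ⟨q, hq, hxq⟩ := List.mem_flatten.mp hx
          have hnotF := hhs.2 q hq x hxq
          have hxE : x ∈ N.edges := ((hhs.1.1 q hq).1.2.1) x hxq
          by_contra hxU
          exact hnotF (Finset.mem_insert_of_mem (Finset.mem_sdiff.mpr
            ⟨hxE, fun hU => hxU (List.mem_toFinset.mp hU)⟩))
        · intro hehs
          obtain ⟨q, hq, heq⟩ := List.mem_flatten.mp hehs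
          exact hhs.2 q hq e heq (Finset.mem_insert_self e K)
    have hkeep : (N.del ((insert e K).erase e)).maxFlow = N.maxFlow := by
      rw [Finset.erase_insert heK]
      exact hKflow
    have hFE : insert e K ⊆ N.edges := by
      intro x hx
      rcases Finset.mem_insert.mp hx with rfl | h
      · exact he
      · exact (Finset.mem_sdiff.mp h).1
    obtain ⟨G, hGcf, heG⟩ :=
      exists_cf_of_critical (Finset.mem_insert_self e K) hFE hKdec hkeep
    exact hH G hGcf heG
  · -- converse: condition on paths ⇒ e in no CF
    intro hyp F hF heF
    obtain ⟨hFne, hFE, hFdec, hFmin⟩ := hF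
    have herase := hFmin (F.erase e) (Finset.erase_ssubset heF)
    obtain ⟨fs, hfs, hlen⟩ := hasFlow_maxFlow (N := N.del (F.erase e))
    rw [isFlowList_del_iff] at hfs
    rw [herase] at hlen
    have hex : ∃ p ∈ fs, e ∈ p := by
      by_contra hno
      push_neg at hno
      have hge : N.maxFlow ≤ (N.del F).maxFlow := by
        refine le_maxFlow ⟨fs, isFlowList_del_iff.mpr ⟨hfs.1, ?_⟩, hlen⟩
        intro q hq x hxq hxF
        by_cases hxe : x = e
        · exact hno q hq (hxe ▸ hxq)
        · exact hfs.2 q hq x hxq (Finset.mem_erase.mpr ⟨hxe, hxF⟩)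
      omega
    obtain ⟨p₀, hp₀fs, hep₀⟩ := hex
    have hp₀ : N.IsPath p₀ := hfs.1.1 p₀ hp₀fs
    have hspec := hyp p₀ hp₀ hep₀
    have hpw : fs.Pairwise List.Disjoint := hfs.1.2.imp (fun {a b} h => h)
    have hfsnd : fs.Nodup := by
      refine List.Pairwise.imp_of_mem ?_ hpw
      intro a b ha hb hd
      intro hab
      subst hab
      obtain ⟨x, hx⟩ := List.exists_mem_of_ne_nil a (hfs.1.1 a ha).1.1
      exact hd hx hx
    have hflow' : (N.del p₀.toFinset).HasFlow (N.maxFlow - 1) := by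
      refine ⟨fs.erase p₀, isFlowList_del_iff.mpr ⟨⟨?_, ?_⟩, ?_⟩, ?_⟩
      · intro q hq
        exact hfs.1.1 q (List.mem_of_mem_erase hq)
      · exact hfs.1.2.sublist List.erase_sublist
      · intro q hq x hxq hxp
        have hqfs : q ∈ fs := List.mem_of_mem_erase hq
        have hqne : q ≠ p₀ := by
          intro hqp
          subst hqp
          exact hfsnd.not_mem_erase hq
        have hd : List.Disjoint q p₀ :=
          by haveI : Std.Symm (@List.Disjoint ε) := ⟨fun _ _ h => List.disjoint_symm h⟩; exact List.Pairwise.forall hpw hqfs hp₀fs hqne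
        exact hd hxq (List.mem_toFinset.mp hxp)
      · rw [List.length_erase_of_mem hp₀fs, hlen]
    have hge := le_maxFlow hflow'
    have hpos : 1 ≤ N.maxFlow := by
      have h1 : fs ≠ [] := List.ne_nil_of_mem hp₀fs
      have h2 : 0 < fs.length := List.length_pos_iff.mpr h1
      omega
    omega
end
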